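/- arXiv:1511.03164 — 2 statements merged into one kernel-verified Lean document; each statement's English description precedes it below -/
import Mathlib

section
/- The A_n-linear map from k (carrying the trivial G-action) to A_n sending 1 to t^{n-1}·Σ_{g∈G} g is injective; writing W_n for its cokernel, i.e., W_n = A_n/⟨t^{n-1}Σ_{g∈G} g⟩, there is an isomorphism of A_n-modules W_n/t^{n-1}W_n ≅ A_{n-1} (equivalently, W_n ⊗_{R_n} R_{n-1} ≅ A_{n-1}). -/
open scoped TensorProduct DirectSum

noncomputable section

variable (S : Type) [CommRing S] [IsDomain S] [IsDiscreteValuationRing S]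
variable (t : S)
variable (G : Type) [Group G] [Fintype G]

/-- `Rq n` is the quotient ring `R_n = S/(t^n)`. -/
abbrev Rq (n : ℕ) : Type := S ⧸ Ideal.span {t ^ n}

/-- `Aq n` is the group algebra `A_n = R_n G`. -/
abbrev Aq (n : ℕ) : Type := MonoidAlgebra (Rq S t n) G

/-- The canonical surjection `R_n → R_i` for `i ≤ n`. -/
def Rmap (i n : ℕ) (h : i ≤ n) : Rq S t n →+* Rq S t i :=
  Ideal.Quotient.factor (Ideal.span_singleton_le_span_singleton.mpr (pow_dvd_pow t h))

/-- The canonical surjection `A_n → A_i` for `i ≤ n`, induced by `R_n → R_i`. -/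
def Amap (i n : ℕ) (h : i ≤ n) : Aq S t G n →+* Aq S t G i :=
  letI : Algebra (Rq S t n) (Aq S t G i) :=
    RingHom.toAlgebra' ((algebraMap (Rq S t i) (Aq S t G i)).comp (Rmap S t i n h))
      (fun r x => Algebra.commutes (Rmap S t i n h r) x)
  ((MonoidAlgebra.lift (Rq S t n) (Aq S t G i) G) (MonoidAlgebra.of (Rq S t i) G)).toRingHom

/-- The augmentation map `A_n → R_n`, `Σ r_g g ↦ Σ r_g`. -/
def aug (n : ℕ) : Aq S t G n →+* Rq S t n :=
  ((MonoidAlgebra.lift (Rq S t n) (Rq S t n) G) 1).toRingHom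

/-- The image of `t` in `R_n`. -/
def tbar (n : ℕ) : Rq S t n := Ideal.Quotient.mk _ t

/-- The norm element `Σ_{g ∈ G} g` of `A_n`. -/
def sigmaEl (n : ℕ) : Aq S t G n := ∑ g : G, MonoidAlgebra.of (Rq S t n) G g

/-- The element `t^{i-1} Σ_{g ∈ G} g` of `A_i`. -/
def wEl (i : ℕ) : Aq S t G i :=
  algebraMap (Rq S t i) (Aq S t G i) (tbar S t i ^ (i - 1)) * sigmaEl S t G i

/-- `W_i = A_i/⟨t^{i-1} Σ_{g∈G} g⟩`. -/
abbrev Wmod (i : ℕ) : Type :=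
  Aq S t G i ⧸ Submodule.span (Aq S t G i) {wEl S t G i}

/-- The submodule `t^m X` of an `A_n`-module `X`. -/
def tSub (n m : ℕ) (X : Type) [AddCommGroup X] [Module (Aq S t G n) X] :
    Submodule (Aq S t G n) X :=
  Submodule.span (Aq S t G n)
    (Set.range fun x : X => algebraMap (Rq S t n) (Aq S t G n) (tbar S t n ^ m) • x)


set_option linter.unusedSectionVars false

lemma Rmap_mk (i n : ℕ) (h : i ≤ n) (s : S) :
    Rmap S t i n h (Ideal.Quotient.mk _ s) = Ideal.Quotient.mk _ s :=
  Ideal.Quotient.factor_mk _ _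

lemma algebraMap_Aq (n : ℕ) (r : Rq S t n) :
    algebraMap (Rq S t n) (Aq S t G n) r = MonoidAlgebra.single 1 r := by
  rw [MonoidAlgebra.coe_algebraMap]; simp

lemma aug_single (n : ℕ) (g : G) (r : Rq S t n) :
    aug S t G n (MonoidAlgebra.single g r) = r := by
  show ((MonoidAlgebra.lift (Rq S t n) (Rq S t n) G) 1) (MonoidAlgebra.single g r) = r
  rw [MonoidAlgebra.lift_single]
  simp

lemma Amap_single (i n : ℕ) (h : i ≤ n) (g : G) (r : Rq S t n) :
    Amap S t G i n h (MonoidAlgebra.single g r)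
      = MonoidAlgebra.single g (Rmap S t i n h r) := by
  letI : Algebra (Rq S t n) (Aq S t G i) :=
    RingHom.toAlgebra' ((algebraMap (Rq S t i) (Aq S t G i)).comp (Rmap S t i n h))
      (fun r x => Algebra.commutes (Rmap S t i n h r) x)
  show ((MonoidAlgebra.lift (Rq S t n) (Aq S t G i) G) (MonoidAlgebra.of (Rq S t i) G))
      (MonoidAlgebra.single g r) = _
  rw [MonoidAlgebra.lift_single, Algebra.smul_def, RingHom.algebraMap_toAlgebra',
    RingHom.comp_apply, algebraMap_Aq, MonoidAlgebra.of_apply,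
    MonoidAlgebra.single_mul_single, one_mul, mul_one]
set_option linter.unusedSectionVars false

lemma Amap_apply (i n : ℕ) (h : i ≤ n) (a : Aq S t G n) (g : G) :
    (Amap S t G i n h a).coeff g = Rmap S t i n h (a.coeff g) := by
  classical
  induction a using MonoidAlgebra.induction with
  | zero => simp
  | single_add g' r f _ _ ih =>
      rw [map_add, MonoidAlgebra.coeff_add, MonoidAlgebra.coeff_add, Finsupp.add_apply,
        Finsupp.add_apply, map_add, ih, Amap_single]
      congr 1
      rw [MonoidAlgebra.coeff_single, MonoidAlgebra.coeff_single, Finsupp.single_apply,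
        Finsupp.single_apply]
      split <;> simp

lemma ker_Rmap (n : ℕ) (hn : 1 ≤ n) :
    RingHom.ker (Rmap S t (n-1) n (Nat.sub_le n 1))
      = Ideal.span {tbar S t n ^ (n-1)} := by
  apply le_antisymm
  · intro x hx
    obtain ⟨s, rfl⟩ := Ideal.Quotient.mk_surjective x
    rw [RingHom.mem_ker, Rmap_mk, Ideal.Quotient.eq_zero_iff_mem,
      Ideal.mem_span_singleton] at hx
    obtain ⟨u, rfl⟩ := hx
    rw [Ideal.mem_span_singleton]
    exact ⟨Ideal.Quotient.mk _ u, by rw [tbar, ← map_pow, ← map_mul]⟩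
  · rw [Ideal.span_le, Set.singleton_subset_iff, SetLike.mem_coe, RingHom.mem_ker,
      map_pow, tbar, Rmap_mk, ← map_pow, Ideal.Quotient.eq_zero_iff_mem,
      Ideal.mem_span_singleton]

lemma single_eq' (n : ℕ) (g : G) (r : Rq S t n) :
    (MonoidAlgebra.single g r : Aq S t G n)
      = algebraMap (Rq S t n) (Aq S t G n) r * MonoidAlgebra.of (Rq S t n) G g := by
  rw [algebraMap_Aq, MonoidAlgebra.of_apply, MonoidAlgebra.single_mul_single, one_mul, mul_one]

lemma of_mul_sigma (n : ℕ) (g : G) :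
    MonoidAlgebra.of (Rq S t n) G g * sigmaEl S t G n = sigmaEl S t G n := by
  rw [sigmaEl, Finset.mul_sum]
  exact Fintype.sum_equiv (Equiv.mulLeft g) _ _ (fun h => by
    simp [MonoidAlgebra.of_apply, MonoidAlgebra.single_mul_single])

lemma mul_sigma (n : ℕ) (a : Aq S t G n) :
    a * sigmaEl S t G n
      = algebraMap (Rq S t n) (Aq S t G n) (aug S t G n a) * sigmaEl S t G n := by
  induction a using MonoidAlgebra.induction with
  | zero => simp
  | single_add g r f _ _ ih =>
      rw [add_mul, ih, map_add, map_add, add_mul]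
      congr 1
      rw [show (aug S t G n) (MonoidAlgebra.single g r) = r from aug_single S t G n g r,
        single_eq', mul_assoc, of_mul_sigma]

lemma coeff_algebraMap_mul_sigma (n : ℕ) (c : Rq S t n) (g₀ : G) :
    (algebraMap (Rq S t n) (Aq S t G n) c * sigmaEl S t G n).coeff g₀ = c := by
  rw [sigmaEl, Finset.mul_sum]
  have : ∀ g : G, (algebraMap (Rq S t n) (Aq S t G n) c * MonoidAlgebra.of (Rq S t n) G g)
      = MonoidAlgebra.single g c := by
    intro g
    rw [algebraMap_Aq, MonoidAlgebra.of_apply, MonoidAlgebra.single_mul_single, one_mul, mul_one]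
  simp_rw [this]
  rw [MonoidAlgebra.coeff_sum, Finset.sum_apply']
  simp only [MonoidAlgebra.coeff_single]
  rw [Finset.sum_eq_single g₀ (fun b _ hb => Finsupp.single_eq_of_ne' hb) (by simp)]
  simp
lemma tbar_pow_mk (n m : ℕ) : tbar S t n ^ m = Ideal.Quotient.mk (Ideal.span {t ^ n}) (t ^ m) := by
  rw [tbar, ← map_pow]

lemma part1 (ht : Irreducible t) (n : ℕ) (hn : 1 ≤ n) :
    letI : Module (Aq S t G n) (Rq S t 1) :=
      Module.compHom _ ((Rmap S t 1 n hn).comp (aug S t G n))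
    ∃ φ : Rq S t 1 →ₗ[Aq S t G n] Aq S t G n,
        φ 1 = wEl S t G n ∧ Function.Injective φ := by
  letI : Module (Aq S t G n) (Rq S t 1) :=
    Module.compHom _ ((Rmap S t 1 n hn).comp (aug S t G n))
  show ∃ φ : Rq S t 1 →ₗ[Aq S t G n] Aq S t G n, φ 1 = wEl S t G n ∧ Function.Injective φ
  -- the auxiliary S-linear map ρ : R₁ → Rₙ, mk u ↦ mk (t^(n-1) * u)
  have hρcond : (Ideal.span {t ^ 1} : Submodule S S) ≤
      Submodule.comap (t ^ (n - 1) • (LinearMap.id : S →ₗ[S] S))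
        (Ideal.span {t ^ n} : Submodule S S) := by
    rw [Ideal.span_le]
    intro x hx
    rw [Set.mem_singleton_iff] at hx
    subst hx
    simp only [SetLike.mem_coe, Submodule.mem_comap, LinearMap.smul_apply, LinearMap.id_coe, id_eq,
      smul_eq_mul, Ideal.mem_span_singleton]
    exact ⟨1, by rw [mul_one, pow_one, ← pow_succ, Nat.sub_add_cancel hn]⟩
  set ρ : Rq S t 1 →ₗ[S] Rq S t n :=
    Submodule.mapQ _ _ (t ^ (n - 1) • (LinearMap.id : S →ₗ[S] S)) hρcond with hρ
  have hρmk : ∀ u : S, ρ (Ideal.Quotient.mk _ u)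
      = Ideal.Quotient.mk (Ideal.span {t ^ n}) (t ^ (n - 1) * u) := by
    intro u
    rw [hρ, ← Ideal.Quotient.mk_eq_mk, Submodule.mapQ_apply]
    simp [Ideal.Quotient.mk_eq_mk]
  set f : Aq S t G n →+* Rq S t 1 := (Rmap S t 1 n hn).comp (aug S t G n) with hf
  have hsmul : ∀ (a : Aq S t G n) (x : Rq S t 1), a • x = f a * x := fun a x => rfl
  refine ⟨{ toFun := fun x => algebraMap (Rq S t n) (Aq S t G n) (ρ x) * sigmaEl S t G n,
            map_add' := by intro x y; rw [map_add, map_add, add_mul],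
            map_smul' := ?_ }, ?_, ?_⟩
  · intro a x
    dsimp only [RingHom.id_apply]
    obtain ⟨u, rfl⟩ := Ideal.Quotient.mk_surjective x
    obtain ⟨s, hs⟩ := Ideal.Quotient.mk_surjective (I := Ideal.span {t ^ n}) (aug S t G n a)
    rw [smul_eq_mul, hsmul, hf, RingHom.comp_apply, ← hs, Rmap_mk, ← map_mul, hρmk, hρmk,
      show t ^ (n - 1) * (s * u)
          = t ^ (n - 1) * u * s by ring, map_mul, map_mul]
    conv_rhs => rw [← mul_assoc,
      ← Algebra.commutes (Ideal.Quotient.mk (Ideal.span {t ^ n}) (t ^ (n - 1) * u)) a,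
      mul_assoc, mul_sigma S t G n a, ← hs, ← mul_assoc]
  · show algebraMap (Rq S t n) (Aq S t G n) (ρ 1) * sigmaEl S t G n = wEl S t G n
    rw [show (1 : Rq S t 1) = Ideal.Quotient.mk _ (1 : S) from rfl, hρmk, mul_one, wEl,
      tbar_pow_mk]
  · rw [injective_iff_map_eq_zero]
    intro x hx
    obtain ⟨u, rfl⟩ := Ideal.Quotient.mk_surjective x
    have h0 : algebraMap (Rq S t n) (Aq S t G n) (ρ (Ideal.Quotient.mk _ u)) * sigmaEl S t G n
        = 0 := hx
    have := coeff_algebraMap_mul_sigma S t G n (ρ (Ideal.Quotient.mk _ u)) 1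
    rw [h0] at this
    rw [hρmk] at this
    have hdvd : t ^ n ∣ t ^ (n - 1) * u := by
      rw [← Ideal.mem_span_singleton, ← Ideal.Quotient.eq_zero_iff_mem]
      exact this.symm
    rw [Ideal.Quotient.eq_zero_iff_mem, Ideal.mem_span_singleton, pow_one]
    have hpow : t ^ n = t ^ (n - 1) * t := by rw [← pow_succ, Nat.sub_add_cancel hn]
    rw [hpow] at hdvd
    have htne : t ^ (n - 1) ≠ 0 := pow_ne_zero _ ht.ne_zero
    exact (mul_dvd_mul_iff_left htne).mp hdvd
lemma part2 (n : ℕ) (hn : 1 ≤ n) :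
    letI : Module (Aq S t G n) (Aq S t G (n - 1)) :=
      Module.compHom _ (Amap S t G (n - 1) n (Nat.sub_le n 1))
    Nonempty ((Wmod S t G n ⧸ tSub S t G n (n - 1) (Wmod S t G n)) ≃ₗ[Aq S t G n]
        Aq S t G (n - 1)) := by
  classical
  letI : Module (Aq S t G n) (Aq S t G (n - 1)) :=
    Module.compHom _ (Amap S t G (n - 1) n (Nat.sub_le n 1))
  show Nonempty ((Wmod S t G n ⧸ tSub S t G n (n - 1) (Wmod S t G n)) ≃ₗ[Aq S t G n]
        Aq S t G (n - 1))
  set c : Aq S t G n := algebraMap (Rq S t n) (Aq S t G n) (tbar S t n ^ (n - 1)) with hc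
  have hcomm : ∀ a : Aq S t G n, c * a = a * c := fun a => Algebra.commutes _ a
  set mulc : Aq S t G n →ₗ[Aq S t G n] Aq S t G n :=
    { toFun := fun x => c * x
      map_add' := mul_add c
      map_smul' := fun a x => by
        dsimp only [RingHom.id_apply]
        rw [smul_eq_mul, smul_eq_mul, ← mul_assoc, hcomm a, mul_assoc] } with hmulc
  set T : Submodule (Aq S t G n) (Aq S t G n) := LinearMap.range mulc with hT
  have hTsub : tSub S t G n (n - 1) (Aq S t G n) = T := by
    rw [hT, ← Submodule.span_eq (LinearMap.range mulc), tSub]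
    congr 1
  set ℓ : Aq S t G n →ₗ[Aq S t G n] Aq S t G (n - 1) :=
    { toFun := Amap S t G (n - 1) n (Nat.sub_le n 1)
      map_add' := map_add _
      map_smul' := fun a x => by
        dsimp only [RingHom.id_apply]
        rw [smul_eq_mul, map_mul]
        rfl } with hl
  have hsurj : Function.Surjective ℓ := by
    intro y
    induction y using MonoidAlgebra.induction with
    | zero => exact ⟨0, map_zero _⟩
    | single_add g r f _ _ ih =>
        obtain ⟨x, hx⟩ := ih
        obtain ⟨s, hs⟩ := Ideal.Quotient.mk_surjective (I := Ideal.span {t ^ (n - 1)}) r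
        refine ⟨(MonoidAlgebra.single g (Ideal.Quotient.mk (Ideal.span {t ^ n}) s) : Aq S t G n) + x, ?_⟩
        rw [map_add, hx]
        congr 1
        show Amap S t G (n - 1) n (Nat.sub_le n 1)
          (MonoidAlgebra.single g (Ideal.Quotient.mk (Ideal.span {t ^ n}) s)) = _
        rw [Amap_single, Rmap_mk, hs]
  have hker : LinearMap.ker ℓ = T := by
    apply le_antisymm
    · intro x hx
      rw [LinearMap.mem_ker] at hx
      have hx' : Amap S t G (n - 1) n (Nat.sub_le n 1) x = 0 := hx
      have hco : ∀ g : G, Rmap S t (n - 1) n (Nat.sub_le n 1) (x.coeff g) = 0 := by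
        intro g
        rw [← Amap_apply, hx']
        rfl
      clear hx hx'
      induction x using MonoidAlgebra.induction with
      | zero => exact zero_mem T
      | single_add g r f hg _ ih =>
          have hrg : Rmap S t (n - 1) n (Nat.sub_le n 1) r = 0 := by
            have := hco g
            rwa [MonoidAlgebra.coeff_add, Finsupp.add_apply, MonoidAlgebra.coeff_single,
              Finsupp.single_eq_same, Finsupp.notMem_support_iff.mp hg, add_zero] at this
          have hf : ∀ g' : G, Rmap S t (n - 1) n (Nat.sub_le n 1) (f.coeff g') = 0 := by
            intro g'
            by_cases h : g' = g
            · subst h; rw [Finsupp.notMem_support_iff.mp hg, map_zero]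
            · have := hco g'
              rwa [MonoidAlgebra.coeff_add, Finsupp.add_apply, MonoidAlgebra.coeff_single,
                  Finsupp.single_eq_of_ne' (Ne.symm h), zero_add] at this
          refine add_mem ?_ (ih hf)
          have hrmem : r ∈ Ideal.span {tbar S t n ^ (n - 1)} := by
            rw [← ker_Rmap S t n hn]; exact hrg
          rw [Ideal.mem_span_singleton] at hrmem
          obtain ⟨v, hv⟩ := hrmem
          refine LinearMap.mem_range.mpr ⟨(MonoidAlgebra.single g v : Aq S t G n), ?_⟩
          show c * (MonoidAlgebra.single g v : Aq S t G n) = (MonoidAlgebra.single g r : Aq S t G n)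
          rw [hc, algebraMap_Aq, MonoidAlgebra.single_mul_single, one_mul, ← hv]
    · rintro x hx
      obtain ⟨y, rfl⟩ := LinearMap.mem_range.mp hx
      rw [LinearMap.mem_ker]
      show Amap S t G (n - 1) n (Nat.sub_le n 1) (c * y) = 0
      rw [map_mul]
      have hc0 : Amap S t G (n - 1) n (Nat.sub_le n 1) c = 0 := by
        rw [hc, algebraMap_Aq, Amap_single, map_pow, tbar, Rmap_mk, ← map_pow,
          show Ideal.Quotient.mk (Ideal.span {t ^ (n - 1)}) (t ^ (n - 1)) = 0 by
            rw [Ideal.Quotient.eq_zero_iff_mem]; exact Ideal.mem_span_singleton_self _]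
        simp
      rw [hc0, zero_mul]
  have hpT : Submodule.span (Aq S t G n) {wEl S t G n} ≤ T := by
    rw [Submodule.span_le, Set.singleton_subset_iff]
    exact LinearMap.mem_range.mpr ⟨sigmaEl S t G n, rfl⟩
  have hmap : tSub S t G n (n - 1) (Wmod S t G n)
      = T.map (Submodule.span (Aq S t G n) {wEl S t G n}).mkQ := by
    rw [← hTsub, tSub, tSub, Submodule.map_span]
    congr 1
    ext y
    simp only [Set.mem_image, Set.mem_range]
    constructor
    · rintro ⟨w, rfl⟩
      obtain ⟨x, rfl⟩ := Submodule.mkQ_surjective _ w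
      exact ⟨_, ⟨x, rfl⟩,
        (Submodule.span (Aq S t G n) {wEl S t G n}).mkQ.map_smul
          (algebraMap (Rq S t n) (Aq S t G n) (tbar S t n ^ (n - 1))) x⟩
    · rintro ⟨a, ⟨x, rfl⟩, rfl⟩
      exact ⟨Submodule.Quotient.mk x,
        ((Submodule.span (Aq S t G n) {wEl S t G n}).mkQ.map_smul
          (algebraMap (Rq S t n) (Aq S t G n) (tbar S t n ^ (n - 1))) x).symm⟩
  exact ⟨(Submodule.quotEquivOfEq _ _ hmap) ≪≫ₗ
    (Submodule.quotientQuotientEquivQuotient _ T hpT) ≪≫ₗ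
    (Submodule.quotEquivOfEq T (LinearMap.ker ℓ) hker.symm) ≪≫ₗ
    (ℓ.quotKerEquivOfSurjective hsurj)⟩


/-- The `A_n`-linear map from `k` (with the trivial `G`-action) to `A_n`
sending `1` to `t^{n-1}·Σ_{g∈G} g` is injective, and writing `W_n` for its cokernel
`A_n/⟨t^{n-1}Σ_{g∈G} g⟩`, there is an isomorphism of `A_n`-modules
`W_n/t^{n-1}W_n ≅ A_{n-1}`. -/
theorem statement2 (ht : Irreducible t) (n : ℕ) (hn : 1 ≤ n) :
    letI : Module (Aq S t G n) (Rq S t 1) :=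
      Module.compHom _ ((Rmap S t 1 n hn).comp (aug S t G n))
    letI : Module (Aq S t G n) (Aq S t G (n - 1)) :=
      Module.compHom _ (Amap S t G (n - 1) n (Nat.sub_le n 1))
    (∃ φ : Rq S t 1 →ₗ[Aq S t G n] Aq S t G n,
        φ 1 = wEl S t G n ∧ Function.Injective φ) ∧
      Nonempty
        ((Wmod S t G n ⧸ tSub S t G n (n - 1) (Wmod S t G n)) ≃ₗ[Aq S t G n]
          Aq S t G (n - 1)) := by
  exact ⟨part1 S t G ht n hn, part2 S t G n hn⟩

end
end

section
/- Let ε: A_n → R_n be the augmentation map Σ_{g∈G} r_g g ↦ Σ_{g∈G} r_g, and let M ⊆ A_n be the kernel of the composite of ε with the canonical surjection R_n → k, so that M = {Σ r_g g : Σ r_g ∈ tR_n}. Then the assignment Σ r_g g ↦ (s mod t^{n-1}), where s ∈ R_n is any element with Σ r_g = t·s, is a well-defined surjective A_n-linear map φ: M → R_{n-1} (with R_{n-1} carrying the trivial G-action); its kernel equals the augmentation ideal ker ε, and the resulting short exact sequence of A_n-modules 0 → ker ε → M → R_{n-1} → 0 splits after restriction of scalars to R_n. -/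
open scoped TensorProduct DirectSum

noncomputable section

variable (S : Type) [CommRing S] [IsDomain S] [IsDiscreteValuationRing S]
variable (t : S)
variable (G : Type) [Group G] [Fintype G]

set_option maxHeartbeats 1000000

lemma rmap_mk (i n : ℕ) (h : i ≤ n) (a : S) :
    Rmap S t i n h (Ideal.Quotient.mk _ a) = Ideal.Quotient.mk _ a :=
  Ideal.Quotient.factor_mk _ _

lemma uniq (ht : Irreducible t) (n : ℕ) (hn : 1 ≤ n) {s s' : Rq S t n}
    (h : tbar S t n * s = tbar S t n * s') :
    Rmap S t (n-1) n (Nat.sub_le n 1) s = Rmap S t (n-1) n (Nat.sub_le n 1) s' := by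
  obtain ⟨a, rfl⟩ := Ideal.Quotient.mk_surjective s
  obtain ⟨a', rfl⟩ := Ideal.Quotient.mk_surjective s'
  have h2 : Ideal.Quotient.mk (Ideal.span {t^n}) (t*a) = Ideal.Quotient.mk _ (t*a') := by
    simpa [tbar, map_mul] using h
  rw [Ideal.Quotient.eq, ← mul_sub, Ideal.mem_span_singleton] at h2
  obtain ⟨c, hc⟩ := h2
  have hn' : t ^ n = t * t^(n-1) := by
    rw [← pow_succ', Nat.sub_add_cancel hn]
  rw [rmap_mk, rmap_mk, Ideal.Quotient.eq, Ideal.mem_span_singleton]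
  refine ⟨c, mul_left_cancel₀ ht.ne_zero ?_⟩
  rw [hc, hn', mul_assoc]

lemma exists_s (n : ℕ) (hn : 1 ≤ n) (x : Aq S t G n)
    (hx : x ∈ RingHom.ker ((Rmap S t 1 n hn).comp (aug S t G n))) :
    ∃ s : Rq S t n, aug S t G n x = tbar S t n * s := by
  have h : Rmap S t 1 n hn (aug S t G n x) = 0 := hx
  obtain ⟨a, ha⟩ := Ideal.Quotient.mk_surjective (aug S t G n x)
  rw [← ha, rmap_mk, Ideal.Quotient.eq_zero_iff_mem, Ideal.mem_span_singleton, pow_one] at h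
  obtain ⟨c, rfl⟩ := h
  exact ⟨Ideal.Quotient.mk _ c, by rw [← ha, tbar, ← map_mul]⟩

/-- multiplication by `t` as a map `R_{n-1} → R_n`. -/
def mulT (n : ℕ) (hn : 1 ≤ n) : Rq S t (n-1) →ₗ[S] Rq S t n :=
  Submodule.liftQ (Ideal.span {t^(n-1)})
    ((Submodule.mkQ (Ideal.span {t^n} : Ideal S)).comp (LinearMap.mulLeft S t))
    (by
      rw [Ideal.span_singleton_le_iff_mem]
      show Submodule.Quotient.mk (t * t^(n-1)) = 0
      rw [Submodule.Quotient.mk_eq_zero]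
      rw [← pow_succ', Nat.sub_add_cancel hn]
      exact Ideal.mem_span_singleton_self _)

lemma mulT_mk (n : ℕ) (hn : 1 ≤ n) (a : S) :
    mulT S t n hn (Ideal.Quotient.mk _ a) = Ideal.Quotient.mk _ (t * a) := rfl

/-- Let `M ⊆ A_n` be the kernel of the composite of the augmentation
`ε : A_n → R_n` with the canonical surjection `R_n → k`.  Then the assignment
`Σ r_g g ↦ (s mod t^{n-1})`, where `Σ r_g = t·s`, is a well-defined surjective `A_n`-linear
map `φ : M → R_{n-1}` (with `R_{n-1}` carrying the trivial `G`-action); its kernel is the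
augmentation ideal `ker ε`, and the resulting short exact sequence
`0 → ker ε → M → R_{n-1} → 0` splits after restriction of scalars to `R_n`. -/
theorem statement4 (ht : Irreducible t) (n : ℕ) (hn : 1 ≤ n) :
    letI : Module (Aq S t G n) (Rq S t (n - 1)) :=
      Module.compHom _ ((Rmap S t (n - 1) n (Nat.sub_le n 1)).comp (aug S t G n))
    letI : Module (Rq S t n) (Rq S t (n - 1)) :=
      Module.compHom _ (Rmap S t (n - 1) n (Nat.sub_le n 1))
    ∃ φ : ↥(RingHom.ker ((Rmap S t 1 n hn).comp (aug S t G n))) →ₗ[Aq S t G n]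
        Rq S t (n - 1),
      (∀ (x : ↥(RingHom.ker ((Rmap S t 1 n hn).comp (aug S t G n)))) (s : Rq S t n),
          aug S t G n ↑x = tbar S t n * s → φ x = Rmap S t (n - 1) n (Nat.sub_le n 1) s) ∧
        Function.Surjective φ ∧
        (∀ x : ↥(RingHom.ker ((Rmap S t 1 n hn).comp (aug S t G n))),
          φ x = 0 ↔ aug S t G n ↑x = 0) ∧
        ∃ r : Rq S t (n - 1) →ₗ[Rq S t n]
            ↥(RingHom.ker ((Rmap S t 1 n hn).comp (aug S t G n))),
          ∀ y, φ (r y) = y := by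
  letI M1 : Module (Aq S t G n) (Rq S t (n - 1)) :=
    Module.compHom _ ((Rmap S t (n - 1) n (Nat.sub_le n 1)).comp (aug S t G n))
  letI M2 : Module (Rq S t n) (Rq S t (n - 1)) :=
    Module.compHom _ (Rmap S t (n - 1) n (Nat.sub_le n 1))
  have hex : ∀ x : ↥(RingHom.ker ((Rmap S t 1 n hn).comp (aug S t G n))),
      ∃ s, aug S t G n ↑x = tbar S t n * s := fun x => exists_s S t G n hn x x.2
  let φ0 : ↥(RingHom.ker ((Rmap S t 1 n hn).comp (aug S t G n))) → Rq S t (n-1) :=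
    fun x => Rmap S t (n-1) n (Nat.sub_le n 1) (Classical.choose (hex x))
  have hspec : ∀ (x : ↥(RingHom.ker ((Rmap S t 1 n hn).comp (aug S t G n))))
      (s : Rq S t n), aug S t G n ↑x = tbar S t n * s →
      φ0 x = Rmap S t (n-1) n (Nat.sub_le n 1) s := fun x s hs =>
    uniq S t ht n hn ((Classical.choose_spec (hex x)).symm.trans hs)
  let φ : ↥(RingHom.ker ((Rmap S t 1 n hn).comp (aug S t G n))) →ₗ[Aq S t G n]
      Rq S t (n - 1) :=
    { toFun := φ0
      map_add' := by
        intro x y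
        have hx := Classical.choose_spec (hex x)
        have hy := Classical.choose_spec (hex y)
        have h : aug S t G n ↑(x + y)
            = tbar S t n * (Classical.choose (hex x) + Classical.choose (hex y)) := by
          rw [Submodule.coe_add, map_add, mul_add, ← hx, ← hy]
        rw [hspec _ _ h, map_add]
      map_smul' := by
        intro c x
        show φ0 (c • x) = Rmap S t (n-1) n (Nat.sub_le n 1) (aug S t G n c) * φ0 x
        have hx := Classical.choose_spec (hex x)
        have h : aug S t G n ↑(c • x)
            = tbar S t n * (aug S t G n c * Classical.choose (hex x)) := by
          rw [Submodule.coe_smul, smul_eq_mul, map_mul, mul_left_comm, ← hx]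
        rw [hspec _ _ h, map_mul] }
  have hsurj : Function.Surjective φ := by
    intro y
    obtain ⟨a, rfl⟩ := Ideal.Quotient.mk_surjective y
    refine ⟨⟨MonoidAlgebra.single 1 (Ideal.Quotient.mk _ (t*a)), ?_⟩, ?_⟩
    · show Rmap S t 1 n hn (aug S t G n _) = 0
      rw [aug_single, rmap_mk, Ideal.Quotient.eq_zero_iff_mem, pow_one]
      exact Ideal.mem_span_singleton.mpr ⟨a, rfl⟩
    · have h : aug S t G n
          (MonoidAlgebra.single 1 (Ideal.Quotient.mk _ (t*a)) : Aq S t G n)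
          = tbar S t n * Ideal.Quotient.mk _ a := by
        rw [aug_single, tbar, ← map_mul]
      exact (hspec _ _ h).trans (rmap_mk S t (n-1) n (Nat.sub_le n 1) a)
  have hker : ∀ x, φ x = 0 ↔ aug S t G n ↑x = 0 := by
    intro x
    constructor
    · intro h0
      have hx := Classical.choose_spec (hex x)
      obtain ⟨a, ha⟩ := Ideal.Quotient.mk_surjective (Classical.choose (hex x))
      have h1 : Rmap S t (n-1) n (Nat.sub_le n 1) (Classical.choose (hex x)) = 0 := h0
      rw [← ha, rmap_mk, Ideal.Quotient.eq_zero_iff_mem, Ideal.mem_span_singleton] at h1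
      obtain ⟨c, hc⟩ := h1
      rw [hx, ← ha, tbar, ← map_mul, hc, ← mul_assoc, ← pow_succ', Nat.sub_add_cancel hn,
        Ideal.Quotient.eq_zero_iff_mem]
      exact Ideal.mul_mem_right _ _ (Ideal.mem_span_singleton_self _)
    · intro h0
      have h : aug S t G n ↑x = tbar S t n * 0 := by rw [h0, mul_zero]
      rw [show φ x = φ0 x from rfl, hspec _ _ h, map_zero]
  let r : Rq S t (n - 1) →ₗ[Rq S t n]
      ↥(RingHom.ker ((Rmap S t 1 n hn).comp (aug S t G n))) :=
    { toFun := fun y => ⟨MonoidAlgebra.single 1 (mulT S t n hn y), by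
        show Rmap S t 1 n hn (aug S t G n _) = 0
        rw [aug_single]
        obtain ⟨a, rfl⟩ := Ideal.Quotient.mk_surjective y
        rw [mulT_mk, rmap_mk, Ideal.Quotient.eq_zero_iff_mem, pow_one]
        exact Ideal.mem_span_singleton.mpr ⟨a, rfl⟩⟩
      map_add' := by
        intro y z
        apply Subtype.ext
        show MonoidAlgebra.single (1:G) (mulT S t n hn (y+z)) = _
        rw [map_add, MonoidAlgebra.single_add]
        rfl
      map_smul' := by
        intro c y
        apply Subtype.ext
        obtain ⟨b, rfl⟩ := Ideal.Quotient.mk_surjective c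
        obtain ⟨a, rfl⟩ := Ideal.Quotient.mk_surjective y
        show MonoidAlgebra.single (1:G)
            (mulT S t n hn (Rmap S t (n-1) n (Nat.sub_le n 1) (Ideal.Quotient.mk _ b)
              * Ideal.Quotient.mk _ a))
          = (Ideal.Quotient.mk _ b : Rq S t n) •
            MonoidAlgebra.single (1:G) (mulT S t n hn (Ideal.Quotient.mk _ a))
        rw [Algebra.smul_def]
        rw [show (algebraMap (Rq S t n) (Aq S t G n)) (Ideal.Quotient.mk _ b)
            = MonoidAlgebra.single (1:G) (Ideal.Quotient.mk _ b) from rfl,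
          MonoidAlgebra.single_mul_single, one_mul, rmap_mk, ← map_mul, mulT_mk, mulT_mk,
          ← map_mul]
        congr 1
        ring }
  have hr : ∀ y, φ (r y) = y := by
    intro y
    obtain ⟨a, rfl⟩ := Ideal.Quotient.mk_surjective y
    have h : aug S t G n ↑(r (Ideal.Quotient.mk _ a))
        = tbar S t n * Ideal.Quotient.mk _ (t^(n-1) * 0 + a) := by
      show aug S t G n (MonoidAlgebra.single 1 (mulT S t n hn _)) = _
      rw [aug_single, mulT_mk, tbar, ← map_mul]
      congr 1; ring
    rw [show φ (r _) = φ0 (r _) from rfl, hspec _ _ h, rmap_mk, Ideal.Quotient.eq,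
      Ideal.mem_span_singleton]
    exact ⟨0, by ring⟩
  exact ⟨φ, hspec, hsurj, hker, r, hr⟩

end
end
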